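/- Let {A, B} be a nontrivial binary GCA pair of size s_1×⋯×s_r (nontrivial meaning s_k > 1 for at least one k). Then for every index tuple i = (i_1,…,i_r) with 0 ≤ i_k ≤ s_k−1 for all k, one has A[s_1−1−i_1,…,s_r−1−i_r]·A[i_1,…,i_r]·B[s_1−1−i_1,…,s_r−1−i_r]·B[i_1,…,i_r] = −1. -/

import Mathlib

open scoped BigOperators

/-- An `r`-dimensional complex array, as a complex-valued function on ℤ^r. -/
abbrev Arr (r : ℕ) := (Fin r → ℤ) → ℂ

/-- Index tuple `i` lies in the box `[0, s₁) × ⋯ × [0, s_r)`. -/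
def InBox {r : ℕ} (s : Fin r → ℕ) (i : Fin r → ℤ) : Prop :=
  ∀ k, 0 ≤ i k ∧ i k < (s k : ℤ)

/-- The array vanishes outside the box of size `s`. -/
def SupportedOn {r : ℕ} (s : Fin r → ℕ) (A : Arr r) : Prop :=
  ∀ i, ¬ InBox s i → A i = 0

/-- Aperiodic autocorrelation of an array. -/
noncomputable def autocorr {r : ℕ} (A : Arr r) (δ : Fin r → ℤ) : ℂ :=
  ∑ᶠ i : Fin r → ℤ, A i * (starRingEnd ℂ) (A (i - δ))

/-- Weight of an array: the sum of squared moduli of its entries. -/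
noncomputable def weight {r : ℕ} (A : Arr r) : ℝ :=
  ∑ᶠ i : Fin r → ℤ, ‖A i‖ ^ 2

/-- Flipped-and-conjugated array `A*`, relative to size `s`. -/
noncomputable def flipConj {r : ℕ} (s : Fin r → ℕ) (A : Arr r) : Arr r :=
  fun i => (starRingEnd ℂ) (A fun k => (s k : ℤ) - 1 - i k)

/-- Kronecker product of arrays, where `t` is the size of `B`:
`(A ⊗ B)[i·t + j] = A[i]·B[j]`. -/
noncomputable def kron {r : ℕ} (t : Fin r → ℕ) (A B : Arr r) : Arr r :=
  fun i => A (fun k => i k / (t k : ℤ)) * B (fun k => i k % (t k : ℤ))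

/-- Concatenation of `X` (of extent `u` in dimension `i0`) and `Y` in dimension `i0`. -/
noncomputable def concat {r : ℕ} (i0 : Fin r) (u : ℕ) (X Y : Arr r) : Arr r :=
  fun v => if v i0 < (u : ℤ) then X v else Y (Function.update v i0 (v i0 - u))

/-- A polyphase array of size `s`: supported on the box and all in-box entries
are `N`-th roots of unity for some `N`. -/
def IsPolyphase {r : ℕ} (s : Fin r → ℕ) (A : Arr r) : Prop :=
  SupportedOn s A ∧ ∃ N : ℕ, 0 < N ∧ ∀ i, InBox s i → A i ^ N = 1

/-- A binary array of size `s`: all in-box entries are ±1, zero outside. -/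
def IsBinary {r : ℕ} (s : Fin r → ℕ) (A : Arr r) : Prop :=
  SupportedOn s A ∧ ∀ i, InBox s i → A i = 1 ∨ A i = -1

/-- Entries are zero or of modulus one, supported on the box of size `s`. -/
def IsUnimodZero {r : ℕ} (s : Fin r → ℕ) (A : Arr r) : Prop :=
  SupportedOn s A ∧ ∀ i, InBox s i → A i = 0 ∨ ‖A i‖ = 1

/-- Golay complementarity of a pair: `R_A + R_B = (w(A)+w(B))·Δ`. -/
def ComplementaryPair {r : ℕ} (A B : Arr r) : Prop :=
  ∀ δ : Fin r → ℤ, autocorr A δ + autocorr B δ =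
    if δ = 0 then ((weight A + weight B : ℝ) : ℂ) else 0

/-- Golay complementarity of a quad: `R_A + R_B + R_C + R_D = (Σ w)·Δ`. -/
def ComplementaryQuad {r : ℕ} (A B C D : Arr r) : Prop :=
  ∀ δ : Fin r → ℤ, autocorr A δ + autocorr B δ + autocorr C δ + autocorr D δ =
    if δ = 0 then ((weight A + weight B + weight C + weight D : ℝ) : ℂ) else 0

namespace Stmt8Aux

open Finset

variable {r : ℕ}

noncomputable def box (s : Fin r → ℕ) : Finset (Fin r → ℤ) :=
  Fintype.piFinset fun k => Finset.Ico (0:ℤ) (s k)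

lemma mem_box {s : Fin r → ℕ} {i : Fin r → ℤ} : i ∈ box s ↔ InBox s i := by
  simp [box, Fintype.mem_piFinset, InBox, Finset.mem_Ico]

def sbar (s : Fin r → ℕ) : Fin r → ℤ := fun k => (s k : ℤ) - 1

lemma inbox_flip {s : Fin r → ℕ} {x : Fin r → ℤ} (h : InBox s x) : InBox s (sbar s - x) := by
  intro k
  have := h k
  simp only [Pi.sub_apply, sbar]
  omega

lemma mem_box_flip {s : Fin r → ℕ} {x : Fin r → ℤ} (h : x ∈ box s) : (sbar s - x) ∈ box s :=
  mem_box.mpr (inbox_flip (mem_box.mp h))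

lemma mem_box_unflip {s : Fin r → ℕ} {x : Fin r → ℤ} (h : (sbar s - x) ∈ box s) : x ∈ box s := by
  have := mem_box_flip h
  rwa [sub_sub_cancel] at this

noncomputable def wfun (a b : (Fin r → ℤ) → ℤ) : (Fin r → ℤ) → ZMod 2 :=
  fun x => if a x * b x = 1 then 0 else 1

noncomputable def cfun (s : Fin r → ℕ) (a b : (Fin r → ℤ) → ℤ) (i j : Fin r → ℤ) : ℤ :=
  (a i * a (sbar s - j) + b i * b (sbar s - j)) / 2

/-- root of the geometric polynomial over the algebraic closure of F₂ -/
lemma exists_geom_root (n : ℕ) (hn : 2 ≤ n) :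
    ∃ ω : AlgebraicClosure (ZMod 2), ω ≠ 0 ∧ ∑ t ∈ Finset.range n, ω ^ t = 0 := by
  set K := AlgebraicClosure (ZMod 2)
  set Q : Polynomial K := ∑ t ∈ Finset.range n, Polynomial.X ^ t with hQ
  have hcoeff : Q.coeff (n-1) = 1 := by
    rw [hQ, Polynomial.finset_sum_coeff]
    rw [Finset.sum_eq_single (n-1)]
    · simp
    · intro t ht hne; rw [Polynomial.coeff_X_pow]; simp only [ite_eq_right_iff]
      intro h; omega
    · intro h; exact absurd (Finset.mem_range.mpr (by omega)) h
  have hdeg : Q.degree ≠ 0 := by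
    intro h0
    have := Polynomial.eq_C_of_degree_le_zero h0.le
    rw [this, Polynomial.coeff_C, if_neg (by omega : ¬ n - 1 = 0)] at hcoeff
    exact one_ne_zero hcoeff.symm
  obtain ⟨ω, hω⟩ := IsAlgClosed.exists_root Q hdeg
  have heval : ∑ t ∈ Finset.range n, ω ^ t = 0 := by
    have : Q.eval ω = 0 := hω
    rw [hQ] at this; simpa [Polynomial.eval_finset_sum] using this
  refine ⟨ω, ?_, heval⟩
  rintro rfl
  rw [Finset.sum_eq_single 0 (fun t ht hne => by simp [zero_pow hne])
    (by intro h; exact absurd (Finset.mem_range.mpr (by omega)) h)] at heval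
  simp at heval



lemma L2step (s : Fin r → ℕ) (a b : (Fin r → ℤ) → ℤ)
    (ha0 : ∀ x, ¬ InBox s x → a x = 0) (hb0 : ∀ x, ¬ InBox s x → b x = 0)
    (hcorr : ∀ δ : Fin r → ℤ, (∑ i ∈ box s, (a i * a (i - δ) + b i * b (i - δ)))
        = if δ = 0 then 2 * (∏ k, (s k : ℤ)) else 0) :
    ∀ γ : Fin r → ℤ, ∑ i ∈ box s, ∑ j ∈ box s,
      (if i + j = γ then a i * a (sbar s - j) + b i * b (sbar s - j) else 0)
      = if γ = sbar s then 2 * (∏ k, (s k : ℤ)) else 0 := by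
  intro γ
  have step1 : ∀ i : Fin r → ℤ, ∑ j ∈ box s,
      (if i + j = γ then a i * a (sbar s - j) + b i * b (sbar s - j) else 0)
      = if γ - i ∈ box s then a i * a (sbar s - (γ - i)) + b i * b (sbar s - (γ - i)) else 0 := by
    intro i
    rw [← Finset.sum_ite_eq' (box s) (γ - i)
      (fun j => a i * a (sbar s - j) + b i * b (sbar s - j))]
    apply Finset.sum_congr rfl
    intro j _
    by_cases h : i + j = γ
    · rw [if_pos h, if_pos (eq_sub_of_add_eq' h)]
    · rw [if_neg h, if_neg (fun hc => h (by rw [hc]; abel))]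
  calc ∑ i ∈ box s, ∑ j ∈ box s,
        (if i + j = γ then a i * a (sbar s - j) + b i * b (sbar s - j) else 0)
      = ∑ i ∈ box s, (a i * a (i - (γ - sbar s)) + b i * b (i - (γ - sbar s))) := by
        apply Finset.sum_congr rfl
        intro i _
        rw [step1 i]
        have harg : sbar s - (γ - i) = i - (γ - sbar s) := by abel
        by_cases h : γ - i ∈ box s
        · rw [if_pos h, harg]
        · rw [if_neg h]
          have h2 : ¬ InBox s (i - (γ - sbar s)) := by
            intro hc
            apply h
            have h3 := mem_box_flip (mem_box.mpr hc)
            rwa [show sbar s - (i - (γ - sbar s)) = γ - i from by abel] at h3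
          rw [ha0 _ h2, hb0 _ h2]
          ring
    _ = if γ - sbar s = 0 then 2 * (∏ k, (s k : ℤ)) else 0 := hcorr (γ - sbar s)
    _ = if γ = sbar s then 2 * (∏ k, (s k : ℤ)) else 0 := by
        by_cases h : γ = sbar s
        · rw [if_pos (by rw [h, sub_self]), if_pos h]
        · rw [if_neg (fun hc => h (by rwa [sub_eq_zero] at hc)), if_neg h]

lemma cfun_spec (s : Fin r → ℕ) (a b : (Fin r → ℤ) → ℤ)
    (ha1 : ∀ x, InBox s x → a x = 1 ∨ a x = -1)
    (hb1 : ∀ x, InBox s x → b x = 1 ∨ b x = -1)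
    {i j : Fin r → ℤ} (hi : i ∈ box s) (hj : j ∈ box s) :
    a i * a (sbar s - j) + b i * b (sbar s - j) = 2 * cfun s a b i j ∧
    ((cfun s a b i j : ℤ) : ZMod 2) = 1 + wfun a b i + wfun a b (sbar s - j) := by
  have hj' : InBox s (sbar s - j) := inbox_flip (mem_box.mp hj)
  obtain h1 | h1 := ha1 i (mem_box.mp hi) <;>
    obtain h2 | h2 := ha1 _ hj' <;>
    obtain h3 | h3 := hb1 i (mem_box.mp hi) <;>
    obtain h4 | h4 := hb1 _ hj' <;>
    · constructor
      · rw [cfun, h1, h2, h3, h4]; norm_num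
      · rw [cfun, wfun, wfun, h1, h2, h3, h4]; norm_num <;> decide



lemma L3step (s : Fin r → ℕ) (a b : (Fin r → ℤ) → ℤ)
    (ha0 : ∀ x, ¬ InBox s x → a x = 0) (hb0 : ∀ x, ¬ InBox s x → b x = 0)
    (ha1 : ∀ x, InBox s x → a x = 1 ∨ a x = -1)
    (hb1 : ∀ x, InBox s x → b x = 1 ∨ b x = -1)
    (hcorr : ∀ δ : Fin r → ℤ, (∑ i ∈ box s, (a i * a (i - δ) + b i * b (i - δ)))
        = if δ = 0 then 2 * (∏ k, (s k : ℤ)) else 0) :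
    ∀ γ : Fin r → ℤ, ∑ i ∈ box s, ∑ j ∈ box s,
      (if i + j = γ then (1 : ZMod 2) + wfun a b i + wfun a b (sbar s - j) else 0)
      = if γ = sbar s then (((∏ k, (s k : ℤ)) : ℤ) : ZMod 2) else 0 := by
  intro γ
  have hZ : ∑ i ∈ box s, ∑ j ∈ box s, (if i + j = γ then cfun s a b i j else 0)
      = if γ = sbar s then (∏ k, (s k : ℤ)) else 0 := by
    apply mul_left_cancel₀ (two_ne_zero (α := ℤ))
    calc (2:ℤ) * ∑ i ∈ box s, ∑ j ∈ box s, (if i + j = γ then cfun s a b i j else 0)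
        = ∑ i ∈ box s, ∑ j ∈ box s, (if i + j = γ then 2 * cfun s a b i j else 0) := by
          simp only [Finset.mul_sum, mul_ite, mul_zero]
      _ = ∑ i ∈ box s, ∑ j ∈ box s,
            (if i + j = γ then a i * a (sbar s - j) + b i * b (sbar s - j) else 0) := by
          apply Finset.sum_congr rfl; intro i hi
          apply Finset.sum_congr rfl; intro j hj
          rw [(cfun_spec s a b ha1 hb1 hi hj).1]
      _ = if γ = sbar s then 2 * (∏ k, (s k : ℤ)) else 0 := L2step s a b ha0 hb0 hcorr γ
      _ = 2 * (if γ = sbar s then (∏ k, (s k : ℤ)) else 0) := by rw [mul_ite, mul_zero]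
  calc ∑ i ∈ box s, ∑ j ∈ box s,
        (if i + j = γ then (1 : ZMod 2) + wfun a b i + wfun a b (sbar s - j) else 0)
      = ∑ i ∈ box s, ∑ j ∈ box s,
        (if i + j = γ then ((cfun s a b i j : ℤ) : ZMod 2) else 0) := by
        apply Finset.sum_congr rfl; intro i hi
        apply Finset.sum_congr rfl; intro j hj
        rw [(cfun_spec s a b ha1 hb1 hi hj).2]
    _ = (((∑ i ∈ box s, ∑ j ∈ box s, (if i + j = γ then cfun s a b i j else 0)) : ℤ) : ZMod 2) := by
        simp only [Int.cast_sum, apply_ite (Int.cast : ℤ → ZMod 2), Int.cast_zero]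
    _ = if γ = sbar s then (((∏ k, (s k : ℤ)) : ℤ) : ZMod 2) else 0 := by
        rw [hZ, apply_ite (Int.cast : ℤ → ZMod 2), Int.cast_zero]

lemma Mstep (s : Fin r → ℕ) (a b : (Fin r → ℤ) → ℤ)
    (ha0 : ∀ x, ¬ InBox s x → a x = 0) (hb0 : ∀ x, ¬ InBox s x → b x = 0)
    (ha1 : ∀ x, InBox s x → a x = 1 ∨ a x = -1)
    (hb1 : ∀ x, InBox s x → b x = 1 ∨ b x = -1)
    (hcorr : ∀ δ : Fin r → ℤ, (∑ i ∈ box s, (a i * a (i - δ) + b i * b (i - δ)))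
        = if δ = 0 then 2 * (∏ k, (s k : ℤ)) else 0) :
    ∀ γ : Fin r → ℤ, ∑ i ∈ box s, ∑ j ∈ box s,
      (if i + j = γ then (1 : ZMod 2) + wfun a b j + wfun a b (sbar s - j) else 0)
      = if γ = sbar s then (((∏ k, (s k : ℤ)) : ℤ) : ZMod 2) else 0 := by
  intro γ
  have expand : ∀ (u : (Fin r → ℤ) → (Fin r → ℤ) → ZMod 2),
      ∑ i ∈ box s, ∑ j ∈ box s,
        (if i + j = γ then (1 : ZMod 2) + u i j + wfun a b (sbar s - j) else 0)
      = (∑ i ∈ box s, ∑ j ∈ box s, (if i + j = γ then (1 : ZMod 2) else 0))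
        + (∑ i ∈ box s, ∑ j ∈ box s, (if i + j = γ then u i j else 0))
        + (∑ i ∈ box s, ∑ j ∈ box s, (if i + j = γ then wfun a b (sbar s - j) else 0)) := by
    intro u
    rw [← Finset.sum_add_distrib, ← Finset.sum_add_distrib]
    apply Finset.sum_congr rfl; intro i _
    rw [← Finset.sum_add_distrib, ← Finset.sum_add_distrib]
    apply Finset.sum_congr rfl; intro j _
    by_cases h : i + j = γ <;> simp [h]
  have hswap : ∑ i ∈ box s, ∑ j ∈ box s, (if i + j = γ then wfun a b j else 0)
      = ∑ i ∈ box s, ∑ j ∈ box s, (if i + j = γ then wfun a b i else 0) := by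
    rw [Finset.sum_comm]
    exact Finset.sum_congr rfl fun x _ => Finset.sum_congr rfl fun y _ => by rw [add_comm]
  rw [expand (fun i j => wfun a b j), hswap, ← expand (fun i j => wfun a b i)]
  exact L3step s a b ha0 hb0 ha1 hb1 hcorr γ


lemma lift_eval (ω : AlgebraicClosure (ZMod 2)) (hω0 : ω ≠ 0) (k0 : Fin r) :
    ∃ Φ : AddMonoidAlgebra (ZMod 2) (Fin r → ℤ) →ₐ[ZMod 2] AlgebraicClosure (ZMod 2),
      ∀ (x : Fin r → ℤ) (c : ZMod 2), Φ (AddMonoidAlgebra.single x c) = c • ω ^ (x k0) := by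
  refine ⟨(AddMonoidAlgebra.lift (ZMod 2) (AlgebraicClosure (ZMod 2)) (Fin r → ℤ))
    { toFun := fun x => ω ^ (Multiplicative.toAdd x k0)
      map_one' := by simp
      map_mul' := fun x y => by
        show ω ^ ((Multiplicative.toAdd (x * y)) k0) = _
        rw [toAdd_mul]
        show ω ^ (Multiplicative.toAdd x k0 + Multiplicative.toAdd y k0) = _
        rw [zpow_add₀ hω0] }, fun x c => ?_⟩
  rw [AddMonoidAlgebra.lift_single]
  rfl


lemma keystep (s : Fin r → ℕ) (a b : (Fin r → ℤ) → ℤ)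
    (ha0 : ∀ x, ¬ InBox s x → a x = 0) (hb0 : ∀ x, ¬ InBox s x → b x = 0)
    (ha1 : ∀ x, InBox s x → a x = 1 ∨ a x = -1)
    (hb1 : ∀ x, InBox s x → b x = 1 ∨ b x = -1)
    (hcorr : ∀ δ : Fin r → ℤ, (∑ i ∈ box s, (a i * a (i - δ) + b i * b (i - δ)))
        = if δ = 0 then 2 * (∏ k, (s k : ℤ)) else 0) :
    (∑ i ∈ box s, AddMonoidAlgebra.single (R := ZMod 2) i 1)
      * (∑ j ∈ box s, AddMonoidAlgebra.single j ((1 : ZMod 2) + wfun a b j + wfun a b (sbar s - j)))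
    = AddMonoidAlgebra.single (sbar s) (((∏ k, (s k : ℤ)) : ℤ) : ZMod 2) := by
  rw [Finset.sum_mul_sum]
  simp only [AddMonoidAlgebra.single_mul_single, one_mul]
  apply AddMonoidAlgebra.ext
  apply Finsupp.ext
  intro γ
  have hL : (∑ i ∈ box s, ∑ j ∈ box s,
      AddMonoidAlgebra.single (R := ZMod 2) (i + j) ((1 : ZMod 2) + wfun a b j + wfun a b (sbar s - j))).coeff γ
      = ∑ i ∈ box s, ∑ j ∈ box s,
        (if i + j = γ then (1 : ZMod 2) + wfun a b j + wfun a b (sbar s - j) else 0) := by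
    rw [AddMonoidAlgebra.coeff_sum, Finsupp.finset_sum_apply]
    apply Finset.sum_congr rfl; intro i _
    rw [AddMonoidAlgebra.coeff_sum, Finsupp.finset_sum_apply]
    apply Finset.sum_congr rfl; intro j _
    exact Finsupp.single_apply
  rw [hL, Mstep s a b ha0 hb0 ha1 hb1 hcorr γ]
  rw [show (AddMonoidAlgebra.single (sbar s) (((∏ k, (s k : ℤ)) : ℤ) : ZMod 2)).coeff γ
    = if sbar s = γ then (((∏ k, (s k : ℤ)) : ℤ) : ZMod 2) else 0 from Finsupp.single_apply]
  by_cases h : γ = sbar s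
  · rw [if_pos h, if_pos h.symm]
  · rw [if_neg h, if_neg (fun hc => h hc.symm)]

lemma evenfinal (s : Fin r → ℕ) (a b : (Fin r → ℤ) → ℤ)
    (ha0 : ∀ x, ¬ InBox s x → a x = 0) (hb0 : ∀ x, ¬ InBox s x → b x = 0)
    (ha1 : ∀ x, InBox s x → a x = 1 ∨ a x = -1)
    (hb1 : ∀ x, InBox s x → b x = 1 ∨ b x = -1)
    (hcorr : ∀ δ : Fin r → ℤ, (∑ i ∈ box s, (a i * a (i - δ) + b i * b (i - δ)))
        = if δ = 0 then 2 * (∏ k, (s k : ℤ)) else 0)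
    (hpos : ∀ k, 0 < s k) (heven : 2 ∣ ∏ k, s k) :
    ∀ x ∈ box s, wfun a b x + wfun a b (sbar s - x) = 1 := by
  have hN0 : (((∏ k, (s k : ℤ)) : ℤ) : ZMod 2) = 0 := by
    have h1 : (∏ k, (s k : ℤ)) = ((∏ k, s k : ℕ) : ℤ) := by push_cast; rfl
    rw [h1, Int.cast_natCast]
    exact (ZMod.natCast_eq_zero_iff _ _).mpr heven
  have key := keystep s a b ha0 hb0 ha1 hb1 hcorr
  rw [hN0, AddMonoidAlgebra.single_zero] at key
  have hPne : (∑ i ∈ box s, AddMonoidAlgebra.single (R := ZMod 2) i 1) ≠ 0 := by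
    intro h
    have h0box : (0 : Fin r → ℤ) ∈ box s := by
      refine mem_box.mpr fun k => ⟨le_refl _, ?_⟩
      have := hpos k
      simp only [Pi.zero_apply]
      exact_mod_cast this
    have h1 : (∑ i ∈ box s, AddMonoidAlgebra.single (R := ZMod 2) i 1).coeff 0 = 1 := by
      rw [AddMonoidAlgebra.coeff_sum, Finsupp.finset_sum_apply]
      rw [show (∑ i ∈ box s, (AddMonoidAlgebra.single (R := ZMod 2) i 1).coeff 0)
        = ∑ i ∈ box s, if i = 0 then (1 : ZMod 2) else 0 from
        Finset.sum_congr rfl fun i _ => Finsupp.single_apply]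
      rw [Finset.sum_ite_eq' (box s) 0 (fun _ => (1 : ZMod 2))]
      rw [if_pos h0box]
    rw [h] at h1
    simp at h1
  have hg0 : (∑ j ∈ box s, AddMonoidAlgebra.single j
      ((1 : ZMod 2) + wfun a b j + wfun a b (sbar s - j))) = 0 :=
    (mul_eq_zero.mp key).resolve_left hPne
  intro x hx
  have hcoeff : (∑ j ∈ box s, AddMonoidAlgebra.single j
      ((1 : ZMod 2) + wfun a b j + wfun a b (sbar s - j))).coeff x = 0 := by
    rw [hg0]; rfl
  rw [AddMonoidAlgebra.coeff_sum, Finsupp.finset_sum_apply] at hcoeff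
  rw [show (∑ j ∈ box s, (AddMonoidAlgebra.single (R := ZMod 2) j
      ((1 : ZMod 2) + wfun a b j + wfun a b (sbar s - j))).coeff x)
    = ∑ j ∈ box s, if j = x then (1 : ZMod 2) + wfun a b j + wfun a b (sbar s - j) else 0 from
    Finset.sum_congr rfl fun j _ => Finsupp.single_apply] at hcoeff
  rw [Finset.sum_ite_eq' (box s) x
    (fun j => (1 : ZMod 2) + wfun a b j + wfun a b (sbar s - j)), if_pos hx] at hcoeff
  have ht : ∀ t u : ZMod 2, 1 + t + u = 0 → t + u = 1 := by decide
  exact ht _ _ hcoeff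

lemma oddfalse (s : Fin r → ℕ) (a b : (Fin r → ℤ) → ℤ)
    (ha0 : ∀ x, ¬ InBox s x → a x = 0) (hb0 : ∀ x, ¬ InBox s x → b x = 0)
    (ha1 : ∀ x, InBox s x → a x = 1 ∨ a x = -1)
    (hb1 : ∀ x, InBox s x → b x = 1 ∨ b x = -1)
    (hcorr : ∀ δ : Fin r → ℤ, (∑ i ∈ box s, (a i * a (i - δ) + b i * b (i - δ)))
        = if δ = 0 then 2 * (∏ k, (s k : ℤ)) else 0)
    (k0 : Fin r) (hk0 : 1 < s k0) (hodd : ¬ 2 ∣ ∏ k, s k) : False := by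
  have hN1 : (((∏ k, (s k : ℤ)) : ℤ) : ZMod 2) = 1 := by
    have h1 : (∏ k, (s k : ℤ)) = ((∏ k, s k : ℕ) : ℤ) := by push_cast; rfl
    rw [h1, Int.cast_natCast, ← ZMod.natCast_mod]
    rw [show (∏ k, s k) % 2 = 1 by omega, Nat.cast_one]
  have key := keystep s a b ha0 hb0 ha1 hb1 hcorr
  rw [hN1] at key
  obtain ⟨ω, hω0, hωsum⟩ := exists_geom_root (s k0) hk0
  obtain ⟨Φ, hΦ⟩ := lift_eval ω hω0 k0
  have hsum0 : ∑ t ∈ Finset.Ico (0:ℤ) (s k0), ω ^ t = 0 := by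
    rw [show (Finset.Ico (0:ℤ) (s k0)) = Finset.map
      ⟨(Nat.cast : ℕ → ℤ), Nat.cast_injective⟩ (Finset.range (s k0)) from ?_]
    · rw [Finset.sum_map]
      simp only [Function.Embedding.coeFn_mk, zpow_natCast]
      exact hωsum
    · ext t
      simp only [Finset.mem_Ico, Finset.mem_map, Finset.mem_range,
        Function.Embedding.coeFn_mk]
      constructor
      · rintro ⟨h1, h2⟩
        exact ⟨t.toNat, by omega, by omega⟩
      · rintro ⟨m, hm, rfl⟩
        exact ⟨by positivity, by exact_mod_cast hm⟩
  have hPhiH : Φ (∑ i ∈ box s, AddMonoidAlgebra.single (R := ZMod 2) i 1) = 0 := by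
    rw [map_sum]
    calc ∑ i ∈ box s, Φ (AddMonoidAlgebra.single (R := ZMod 2) i 1)
        = ∑ i ∈ Fintype.piFinset (fun k => Finset.Ico (0:ℤ) (s k)),
            ∏ k, (if k = k0 then ω ^ (i k) else 1) := by
          apply Finset.sum_congr rfl; intro i _
          rw [hΦ i 1, one_smul, Finset.prod_ite_eq' Finset.univ k0 (fun k => ω ^ (i k)),
            if_pos (Finset.mem_univ _)]
      _ = ∏ k, ∑ t ∈ Finset.Ico (0:ℤ) (s k), (if k = k0 then ω ^ t else 1) :=
          (Finset.prod_univ_sum (κ := fun _ => ℤ) (fun k => Finset.Ico (0:ℤ) (s k)) (fun k t => if k = k0 then ω ^ t else 1)).symm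
      _ = 0 := by
          apply Finset.prod_eq_zero (Finset.mem_univ k0)
          simpa using hsum0
  have hc := congrArg Φ key
  rw [map_mul, hPhiH, zero_mul, hΦ (sbar s) 1, one_smul] at hc
  exact (zpow_ne_zero _ hω0) hc.symm



lemma core (s : Fin r → ℕ) (a b : (Fin r → ℤ) → ℤ)
    (ha0 : ∀ x, ¬ InBox s x → a x = 0) (hb0 : ∀ x, ¬ InBox s x → b x = 0)
    (ha1 : ∀ x, InBox s x → a x = 1 ∨ a x = -1)
    (hb1 : ∀ x, InBox s x → b x = 1 ∨ b x = -1)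
    (hcorr : ∀ δ : Fin r → ℤ, (∑ i ∈ box s, (a i * a (i - δ) + b i * b (i - δ)))
        = if δ = 0 then 2 * (∏ k, (s k : ℤ)) else 0)
    (hpos : ∀ k, 0 < s k) (hnontriv : ∃ k, 1 < s k) :
    ∀ i, InBox s i → a (sbar s - i) * a i * (b (sbar s - i) * b i) = -1 := by
  intro i hi
  by_cases hdvd : 2 ∣ ∏ k, s k
  · have hw := evenfinal s a b ha0 hb0 ha1 hb1 hcorr hpos hdvd i (mem_box.mpr hi)
    have hi' : InBox s (sbar s - i) := inbox_flip hi
    have hne : a i * b i ≠ a (sbar s - i) * b (sbar s - i) := by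
      intro heq
      have hww : wfun a b i = wfun a b (sbar s - i) := by unfold wfun; rw [heq]
      rw [hww] at hw
      have hzz : ∀ t : ZMod 2, ¬ (t + t = 1) := by decide
      exact hzz _ hw
    have hgoal : (a i * b i) * (a (sbar s - i) * b (sbar s - i)) = -1 := by
      rcases ha1 i hi with h5|h5 <;> rcases hb1 i hi with h6|h6 <;>
        rcases ha1 _ hi' with h7|h7 <;> rcases hb1 _ hi' with h8|h8 <;>
        rw [h5, h6, h7, h8] at hne ⊢ <;> omega
    linear_combination hgoal
  · obtain ⟨k0, hk0⟩ := hnontriv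
    exact (oddfalse s a b ha0 hb0 ha1 hb1 hcorr k0 hk0 hdvd).elim


end Stmt8Aux

open Stmt8Aux Finset

/-- symmetry of a nontrivial binary GCA pair:
A[s−1−i]·A[i]·B[s−1−i]·B[i] = −1 for every in-box index i. -/
theorem stmt8 {r : ℕ} (s : Fin r → ℕ) (A B : Arr r)
    (hA : IsBinary s A) (hB : IsBinary s B) (hAB : ComplementaryPair A B)
    (hnontriv : ∃ k, 1 < s k) :
    ∀ i : Fin r → ℤ, InBox s i →
      A (fun k => (s k : ℤ) - 1 - i k) * A i *
        B (fun k => (s k : ℤ) - 1 - i k) * B i = -1 := by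
  classical
  intro i hi
  have hpos : ∀ k, 0 < s k := by
    intro k
    have h := hi k
    have h2 : (0 : ℤ) < (s k : ℤ) := lt_of_le_of_lt h.1 h.2
    exact_mod_cast h2
  set a : (Fin r → ℤ) → ℤ := fun x => if A x = 1 then 1 else if A x = -1 then -1 else 0 with hadef
  set b : (Fin r → ℤ) → ℤ := fun x => if B x = 1 then 1 else if B x = -1 then -1 else 0 with hbdef
  have hacast : ∀ x, ((a x : ℤ) : ℂ) = A x := by
    intro x
    by_cases hx : InBox s x
    · rcases hA.2 x hx with h|h <;> norm_num [hadef, h]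
    · norm_num [hadef, hA.1 x hx]
  have hbcast : ∀ x, ((b x : ℤ) : ℂ) = B x := by
    intro x
    by_cases hx : InBox s x
    · rcases hB.2 x hx with h|h <;> norm_num [hbdef, h]
    · norm_num [hbdef, hB.1 x hx]
  have ha0 : ∀ x, ¬ InBox s x → a x = 0 := fun x hx => by norm_num [hadef, hA.1 x hx]
  have hb0 : ∀ x, ¬ InBox s x → b x = 0 := fun x hx => by norm_num [hbdef, hB.1 x hx]
  have ha1 : ∀ x, InBox s x → a x = 1 ∨ a x = -1 := by
    intro x hx
    rcases hA.2 x hx with h|h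
    · left; norm_num [hadef, h]
    · right; norm_num [hadef, h]
  have hb1 : ∀ x, InBox s x → b x = 1 ∨ b x = -1 := by
    intro x hx
    rcases hB.2 x hx with h|h
    · left; norm_num [hbdef, h]
    · right; norm_num [hbdef, h]
  -- weights
  have hwt : ∀ (C : Arr r), IsBinary s C → weight C = ((∏ k, s k : ℕ) : ℝ) := by
    intro C hC
    have hsupp : Function.support (fun x => ‖C x‖ ^ 2) ⊆ ↑(box s) := by
      intro x hx
      rw [Finset.mem_coe, mem_box]
      rw [Function.mem_support] at hx
      by_contra hmem
      exact hx (by rw [hC.1 x hmem]; simp)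
    rw [weight, finsum_eq_finset_sum_of_support_subset _ hsupp]
    have h1 : ∀ x ∈ box s, ‖C x‖ ^ 2 = 1 := by
      intro x hx
      rcases hC.2 x (mem_box.mp hx) with h|h <;> rw [h] <;> norm_num
    rw [Finset.sum_congr rfl h1, Finset.sum_const, nsmul_eq_mul, mul_one]
    congr 1
    rw [show Stmt8Aux.box s = Fintype.piFinset (fun k => Finset.Ico (0:ℤ) (s k)) from rfl,
      Fintype.card_piFinset]
    apply Finset.prod_congr rfl
    intro k _
    rw [Int.card_Ico]
    omega
  -- correlation identity over ℤ
  have hcorr : ∀ δ : Fin r → ℤ, (∑ x ∈ box s, (a x * a (x - δ) + b x * b (x - δ)))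
      = if δ = 0 then 2 * (∏ k, (s k : ℤ)) else 0 := by
    intro δ
    have hsuppA : Function.support (fun x => A x * (starRingEnd ℂ) (A (x - δ))) ⊆ ↑(box s) := by
      intro x hx
      rw [Finset.mem_coe, mem_box]
      rw [Function.mem_support] at hx
      by_contra hmem
      exact hx (by rw [hA.1 x hmem]; simp)
    have hsuppB : Function.support (fun x => B x * (starRingEnd ℂ) (B (x - δ))) ⊆ ↑(box s) := by
      intro x hx
      rw [Finset.mem_coe, mem_box]
      rw [Function.mem_support] at hx
      by_contra hmem
      exact hx (by rw [hB.1 x hmem]; simp)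
    have h2 := hAB δ
    rw [autocorr, autocorr, finsum_eq_finset_sum_of_support_subset _ hsuppA,
      finsum_eq_finset_sum_of_support_subset _ hsuppB, ← Finset.sum_add_distrib] at h2
    have h3 : ∑ x ∈ box s, (A x * (starRingEnd ℂ) (A (x - δ)) + B x * (starRingEnd ℂ) (B (x - δ)))
        = ((∑ x ∈ box s, (a x * a (x - δ) + b x * b (x - δ)) : ℤ) : ℂ) := by
      rw [Int.cast_sum]
      apply Finset.sum_congr rfl
      intro x _
      rw [← hacast x, ← hacast (x - δ), ← hbcast x, ← hbcast (x - δ),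
        map_intCast, map_intCast]
      push_cast
      ring
    rw [h3, hwt A hA, hwt B hB] at h2
    have h4 : ((∑ x ∈ box s, (a x * a (x - δ) + b x * b (x - δ)) : ℤ) : ℂ)
        = ((if δ = 0 then 2 * (∏ k, (s k : ℤ)) else 0 : ℤ) : ℂ) := by
      rw [h2]
      by_cases h : δ = 0
      · rw [if_pos h, if_pos h]
        push_cast
        ring
      · rw [if_neg h, if_neg h, Int.cast_zero]
    exact_mod_cast h4
  have hres := core s a b ha0 hb0 ha1 hb1 hcorr hpos hnontriv i hi
  have harg : (fun k => (s k : ℤ) - 1 - i k) = sbar s - i := rfl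
  rw [harg, ← hacast, ← hacast, ← hbcast, ← hbcast]
  calc ((a (sbar s - i) : ℤ) : ℂ) * ((a i : ℤ) : ℂ) * ((b (sbar s - i) : ℤ) : ℂ) * ((b i : ℤ) : ℂ)
      = ((a (sbar s - i) * a i * (b (sbar s - i) * b i) : ℤ) : ℂ) := by push_cast; ring
    _ = ((-1 : ℤ) : ℂ) := by rw [hres]
    _ = -1 := by norm_num
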